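/- Let r ≥ 1, let c_0,…,c_{r−1} be complex numbers with c_ℓ ≠ 0 and c_ℓ ≠ 1 for all ℓ, let β ∈ ℂ, and let n = (n_0,…,n_{r−1}) ∈ ℕ^r. For γ ∈ ℂ define (Ψ^γ_{c} f)(x) = (c/(c−1))·((x+γ−1)·f(x) − (x/c)·f(x−1)) on functions f : ℂ → ℂ, and set N_ℓ = n_0 + ⋯ + n_{ℓ−1} (with N_0 = 0). Then the composition (Ψ^{β+N_0+1}_{c_0} ∘ ⋯ ∘ Ψ^{β+N_0+n_0}_{c_0}) ∘ (Ψ^{β+N_1+1}_{c_1} ∘ ⋯ ∘ Ψ^{β+N_1+n_1}_{c_1}) ∘ ⋯ ∘ (Ψ^{β+N_{r−1}+1}_{c_{r−1}} ∘ ⋯ ∘ Ψ^{β+N_{r−1}+n_{r−1}}_{c_{r−1}}) applied to the constant function 1 equals, at every x ∈ ℂ, the explicit polynomial M^{β,c}_n(x) = Σ_{k_0=0}^{n_0}⋯Σ_{k_{r−1}=0}^{n_{r−1}} (Π_{ℓ=0}^{r−1} binom(n_ℓ,k_ℓ)·c_ℓ^{n_ℓ−k_ℓ}/(c_ℓ−1)^{n_ℓ})·(−x)_{|k|}·(x+β)_{|n|−|k|},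 where |k| = k_0+⋯+k_{r−1}, |n| = n_0+⋯+n_{r−1}, and (y)_m is the rising Pochhammer symbol. -/

import Mathlib

/-- The rising Pochhammer symbol `(y)_m = y(y+1)⋯(y+m-1)`. -/
noncomputable def poch (y : ℂ) (m : ℕ) : ℂ := ∏ i ∈ Finset.range m, (y + i)

/-- The Meixner raising operator
`(Ψ^γ_c f)(x) = (c/(c-1))·((x+γ-1)·f(x) - (x/c)·f(x-1))`. -/
noncomputable def PsiOp (γ c : ℂ) (f : ℂ → ℂ) : ℂ → ℂ :=
  fun x => (c / (c - 1)) * ((x + γ - 1) * f x - (x / c) * f (x - 1))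

/-- The composition `Ψ^{γ₀+1}_c ∘ Ψ^{γ₀+2}_c ∘ ⋯ ∘ Ψ^{γ₀+j}_c`. -/
noncomputable def chainPsi (c : ℂ) : ℂ → ℕ → (ℂ → ℂ) → (ℂ → ℂ)
  | _, 0 => id
  | γ₀, j + 1 => PsiOp (γ₀ + 1) c ∘ chainPsi c (γ₀ + 1) j

/-- The explicit type II Meixner--Angelesco polynomial of the first kind
(as a function of `x = z^r`). -/
noncomputable def meixnerAngelesco (r : ℕ) (β : ℂ) (c : Fin r → ℂ) (n : Fin r → ℕ)
    (x : ℂ) : ℂ :=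
  ∑ k ∈ Fintype.piFinset (fun i : Fin r => Finset.range (n i + 1)),
    (∏ ℓ : Fin r, ((n ℓ).choose (k ℓ) : ℂ) * (c ℓ) ^ (n ℓ - k ℓ) / (c ℓ - 1) ^ (n ℓ)) *
      poch (-x) (∑ i, k i) * poch (x + β) ((∑ i, n i) - ∑ i, k i)

lemma chainPsi_zero (c γ : ℂ) : chainPsi c γ 0 = id := rfl
lemma chainPsi_succ (c γ : ℂ) (j : ℕ) :
    chainPsi c γ (j+1) = PsiOp (γ + 1) c ∘ chainPsi c (γ + 1) j := rfl

lemma poch_zero (y : ℂ) : poch y 0 = 1 := by simp [poch]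

lemma poch_succ_left (y : ℂ) (m : ℕ) : poch y (m+1) = y * poch (y+1) m := by
  rw [poch, Finset.prod_range_succ', poch]
  push_cast
  rw [add_zero, mul_comm]
  congr 1
  exact Finset.prod_congr rfl fun i _ => by ring

lemma PsiOp_T (c γ : ℂ) (hc0 : c ≠ 0) (hc1 : c ≠ 1) (A B : ℕ) (x : ℂ) :
    PsiOp (γ+1) c (fun y => poch (-y) A * poch (y + (γ+1)) B) x
      = c/(c-1) * (poch (-x) A * poch (x+γ) (B+1))
        + 1/(c-1) * (poch (-x) (A+1) * poch (x+γ) B) := by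
  have hc1' : c - 1 ≠ 0 := sub_ne_zero.mpr hc1
  have h1 : poch (x+γ) (B+1) = (x+γ) * poch (x+γ+1) B := poch_succ_left _ _
  have h2 : poch (-x) (A+1) = (-x) * poch (-x+1) A := poch_succ_left _ _
  have h3 : (-(x-1)) = -x + 1 := by ring
  have h4 : (x - 1 + (γ+1)) = x + γ := by ring
  have h5 : (x + (γ+1)) = x + γ + 1 := by ring
  simp only [PsiOp, h1, h2, h3, h4, h5]
  field_simp
  ring

lemma PsiOp_sum {ι : Type*} (s : Finset ι) (γ c : ℂ) (f : ι → ℂ → ℂ) (x : ℂ) :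
    PsiOp γ c (fun y => ∑ i ∈ s, f i y) x = ∑ i ∈ s, PsiOp γ c (f i) x := by
  simp only [PsiOp, Finset.mul_sum, ← Finset.sum_sub_distrib]

lemma PsiOp_const_mul (γ c t : ℂ) (f : ℂ → ℂ) (x : ℂ) :
    PsiOp γ c (fun y => t * f y) x = t * PsiOp γ c f x := by
  simp only [PsiOp]; ring

lemma chainPsi_sum {ι : Type*} (c : ℂ) (m : ℕ) :
    ∀ (γ : ℂ) (s : Finset ι) (f : ι → ℂ → ℂ) (x : ℂ),
    chainPsi c γ m (fun y => ∑ i ∈ s, f i y) x = ∑ i ∈ s, chainPsi c γ m (f i) x := by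
  induction m with
  | zero => intro γ s f x; simp [chainPsi_zero]
  | succ m ih =>
    intro γ s f x
    rw [chainPsi_succ]
    simp only [Function.comp_apply]
    rw [show (chainPsi c (γ+1) m fun y => ∑ i ∈ s, f i y)
        = (fun y => ∑ i ∈ s, chainPsi c (γ+1) m (f i) y) from funext fun y => ih (γ+1) s f y]
    rw [PsiOp_sum]

lemma chainPsi_const_mul (c : ℂ) (m : ℕ) :
    ∀ (γ t : ℂ) (f : ℂ → ℂ) (x : ℂ),
    chainPsi c γ m (fun y => t * f y) x = t * chainPsi c γ m f x := by
  induction m with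
  | zero => intro γ t f x; simp [chainPsi_zero]
  | succ m ih =>
    intro γ t f x
    rw [chainPsi_succ]
    simp only [Function.comp_apply]
    rw [show (chainPsi c (γ+1) m fun y => t * f y)
        = (fun y => t * chainPsi c (γ+1) m f y) from funext fun y => ih (γ+1) t f y]
    rw [PsiOp_const_mul]

noncomputable def auxD (c γ x : ℂ) (a b m k : ℕ) : ℂ :=
  (m.choose k : ℂ) * c^(m-k)/(c-1)^m * (poch (-x) (a+k) * poch (x+γ) (b+(m-k)))

noncomputable def auxG (c γ x : ℂ) (a b m k : ℕ) : ℂ :=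
  (m.choose k : ℂ) * c^(m+1-k)/(c-1)^(m+1) * (poch (-x) (a+k) * poch (x+γ) (b+(m+1-k)))

noncomputable def auxB (c γ x : ℂ) (a b m k : ℕ) : ℂ :=
  (m.choose k : ℂ) * c^(m-k)/(c-1)^(m+1) * (poch (-x) (a+k+1) * poch (x+γ) (b+(m-k)))

lemma chainPsi_T (c : ℂ) (hc0 : c ≠ 0) (hc1 : c ≠ 1) (m : ℕ) :
    ∀ (γ δ : ℂ), δ = γ + m → ∀ (a b : ℕ) (x : ℂ),
    chainPsi c γ m (fun y => poch (-y) a * poch (y + δ) b) x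
      = ∑ k ∈ Finset.range (m+1), auxD c γ x a b m k := by
  have hc1' : c - 1 ≠ 0 := sub_ne_zero.mpr hc1
  induction m with
  | zero =>
    intro γ δ hδ a b x
    simp only [Nat.cast_zero, add_zero] at hδ
    subst hδ
    simp [chainPsi_zero, auxD]
  | succ m ih =>
    intro γ δ hδ a b x
    have hδ' : δ = (γ+1) + m := by rw [hδ]; push_cast; ring
    rw [chainPsi_succ]
    simp only [Function.comp_apply]
    rw [show (chainPsi c (γ+1) m fun y => poch (-y) a * poch (y + δ) b)
        = (fun z => ∑ k ∈ Finset.range (m+1), auxD c (γ+1) z a b m k)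
      from funext fun z => ih (γ+1) δ hδ' a b z]
    rw [PsiOp_sum]
    have hstep : ∀ k ∈ Finset.range (m+1),
        PsiOp (γ+1) c (fun z => auxD c (γ+1) z a b m k) x
          = auxG c γ x a b m k + auxB c γ x a b m k := by
      intro k hk
      have hk' : k ≤ m := Nat.lt_succ_iff.mp (Finset.mem_range.mp hk)
      have e0 : (fun z => auxD c (γ+1) z a b m k)
          = fun z => ((m.choose k : ℂ) * c^(m-k)/(c-1)^m) *
              ((fun w => poch (-w) (a+k) * poch (w + (γ+1)) (b+(m-k))) z) := by
        funext z; simp [auxD]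
      rw [e0, PsiOp_const_mul, PsiOp_T c γ hc0 hc1]
      have e1 : m+1-k = (m-k)+1 := by omega
      unfold auxG auxB
      rw [e1]
      rw [show b + (m - k + 1) = b + (m - k) + 1 from rfl, pow_succ c, pow_succ (c-1)]
      field_simp
    rw [Finset.sum_congr rfl hstep, Finset.sum_add_distrib]
    have hD : ∀ k ∈ Finset.range (m+1),
        auxD c γ x a b (m+1) (k+1) = auxB c γ x a b m k + auxG c γ x a b m (k+1) := by
      intro k hk
      unfold auxD auxB auxG
      rw [Nat.choose_succ_succ, Nat.succ_sub_succ]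
      simp only [Nat.succ_eq_add_one, ← Nat.add_assoc]
      push_cast
      ring
    have hD0 : auxD c γ x a b (m+1) 0 = auxG c γ x a b m 0 := by
      simp [auxD, auxG]
    have hGtop : auxG c γ x a b m (m+1) = 0 := by
      simp [auxG, Nat.choose_succ_self]
    have hGs : ∑ k ∈ Finset.range (m+1), auxG c γ x a b m (k+1) + auxG c γ x a b m 0
        = ∑ k ∈ Finset.range (m+1), auxG c γ x a b m k := by
      rw [← Finset.sum_range_succ' (fun k => auxG c γ x a b m k) (m+1),
        Finset.sum_range_succ (fun k => auxG c γ x a b m k) (m+1), hGtop, add_zero]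
    conv_rhs => rw [Finset.sum_range_succ']
    rw [Finset.sum_congr rfl hD, hD0, Finset.sum_add_distrib]
    linear_combination - hGs

lemma sum_piFinset_cons {r : ℕ} (s : Fin (r+1) → Finset ℕ) (f : (Fin (r+1) → ℕ) → ℂ) :
    ∑ k ∈ Fintype.piFinset s, f k
      = ∑ k0 ∈ s 0, ∑ k ∈ Fintype.piFinset (fun i : Fin r => s i.succ), f (Fin.cons k0 k) := by
  rw [← Finset.sum_product']
  refine Finset.sum_nbij' (i := fun k => (k 0, Fin.tail k))
    (j := fun p => Fin.cons p.1 p.2) ?_ ?_ ?_ ?_ ?_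
  · intro k hk
    rw [Fintype.mem_piFinset] at hk
    refine Finset.mem_product.mpr ⟨hk 0, ?_⟩
    rw [Fintype.mem_piFinset]
    intro i; exact hk i.succ
  · intro p hp
    rw [Finset.mem_product] at hp
    rw [Fintype.mem_piFinset]
    intro i
    refine Fin.cases ?_ ?_ i
    · simpa using hp.1
    · intro j
      simp only [Fin.cons_succ]
      exact Fintype.mem_piFinset.mp hp.2 j
  · intro k hk
    exact Fin.cons_self_tail k
  · intro p hp
    simp [Fin.tail_cons]
  · intro k hk
    rw [Fin.cons_self_tail k]

lemma filter_lt_succ_sum {r : ℕ} (n : Fin (r+1) → ℕ) (j : Fin r) :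
    (∑ i ∈ Finset.univ.filter (fun i : Fin (r+1) => i < j.succ), n i)
      = n 0 + ∑ i ∈ Finset.univ.filter (fun i : Fin r => i < j), n i.succ := by
  rw [Finset.sum_filter, Finset.sum_filter, Fin.sum_univ_succ]
  simp [Fin.succ_pos, Fin.succ_lt_succ_iff]

lemma foldT : ∀ (r : ℕ) (c : Fin r → ℂ), (∀ ℓ, c ℓ ≠ 0) → (∀ ℓ, c ℓ ≠ 1) →
    ∀ (β δ : ℂ) (n : Fin r → ℕ), δ = β + ((∑ i, n i : ℕ) : ℂ) → ∀ (a b : ℕ) (x : ℂ),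
    ((List.finRange r).foldr
        (fun ℓ g =>
          chainPsi (c ℓ)
            (β + ((∑ i ∈ Finset.univ.filter (fun i : Fin r => i < ℓ), n i : ℕ) : ℂ))
            (n ℓ) ∘ g)
        id)
      (fun y => poch (-y) a * poch (y + δ) b) x
    = ∑ k ∈ Fintype.piFinset (fun i : Fin r => Finset.range (n i + 1)),
        (∏ ℓ : Fin r, ((n ℓ).choose (k ℓ) : ℂ) * (c ℓ) ^ (n ℓ - k ℓ) / (c ℓ - 1) ^ (n ℓ)) *
          (poch (-x) (a + ∑ i, k i) * poch (x + β) (b + ((∑ i, n i) - ∑ i, k i))) := by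
  intro r
  induction r with
  | zero =>
    intro c hc0 hc1 β δ n hδ a b x
    simp only [Finset.univ_eq_empty, Finset.sum_empty, Nat.cast_zero, add_zero] at hδ
    subst hδ
    simp [poch]
  | succ r ih =>
    intro c hc0 hc1 β δ n hδ a b x
    have hδ' : δ = (β + ((n 0 : ℕ) : ℂ)) + ((∑ i : Fin r, n i.succ : ℕ) : ℂ) := by
      rw [hδ, Fin.sum_univ_succ]; push_cast; ring
    rw [List.finRange_succ, List.foldr_cons, List.foldr_map]
    have hfun : (fun (j : Fin r) (g : (ℂ → ℂ) → (ℂ → ℂ)) =>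
          chainPsi (c j.succ)
            (β + ((∑ i ∈ Finset.univ.filter (fun i : Fin (r+1) => i < j.succ), n i : ℕ) : ℂ))
            (n j.succ) ∘ g)
        = (fun (j : Fin r) (g : (ℂ → ℂ) → (ℂ → ℂ)) =>
          chainPsi (c j.succ)
            ((β + ((n 0 : ℕ) : ℂ)) +
              ((∑ i ∈ Finset.univ.filter (fun i : Fin r => i < j), n i.succ : ℕ) : ℂ))
            (n j.succ) ∘ g) := by
      funext j g
      rw [filter_lt_succ_sum n j, Nat.cast_add, ← add_assoc]
    rw [hfun]
    have hin : ((List.finRange r).foldr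
          (fun (j : Fin r) (g : (ℂ → ℂ) → (ℂ → ℂ)) =>
            chainPsi (c j.succ)
              ((β + ((n 0 : ℕ) : ℂ)) +
                ((∑ i ∈ Finset.univ.filter (fun i : Fin r => i < j), n i.succ : ℕ) : ℂ))
              (n j.succ) ∘ g) id)
          (fun y => poch (-y) a * poch (y + δ) b)
        = fun z => ∑ k ∈ Fintype.piFinset (fun i : Fin r => Finset.range (n i.succ + 1)),
            (∏ ℓ : Fin r, ((n ℓ.succ).choose (k ℓ) : ℂ) * (c ℓ.succ) ^ (n ℓ.succ - k ℓ) /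
                (c ℓ.succ - 1) ^ (n ℓ.succ)) *
              (poch (-z) (a + ∑ i : Fin r, k i) *
                poch (z + (β + ((n 0 : ℕ) : ℂ)))
                  (b + ((∑ i : Fin r, n i.succ) - ∑ i : Fin r, k i))) :=
      funext fun z => ih (fun j => c j.succ) (fun j => hc0 j.succ) (fun j => hc1 j.succ)
        (β + ((n 0 : ℕ) : ℂ)) δ (fun j => n j.succ) hδ' a b z
    simp only [Function.comp_apply]
    rw [hin]
    have h0 : (β + ((∑ i ∈ Finset.univ.filter (fun i : Fin (r+1) => i < 0), n i : ℕ) : ℂ)) = β := by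
      simp
    rw [h0, chainPsi_sum]
    rw [sum_piFinset_cons (fun i : Fin (r+1) => Finset.range (n i + 1))]
    rw [Finset.sum_comm]
    apply Finset.sum_congr rfl
    intro k' hk'
    rw [chainPsi_const_mul, chainPsi_T (c 0) (hc0 0) (hc1 0) (n 0) β (β + ((n 0 : ℕ) : ℂ)) rfl,
      Finset.mul_sum]
    apply Finset.sum_congr rfl
    intro k0 hk0
    have hk0' : k0 ≤ n 0 := Nat.lt_succ_iff.mp (Finset.mem_range.mp hk0)
    have hk's : (∑ i : Fin r, k' i) ≤ ∑ i : Fin r, n i.succ := by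
      apply Finset.sum_le_sum
      intro i _
      exact Nat.lt_succ_iff.mp (Finset.mem_range.mp (Fintype.mem_piFinset.mp hk' i))
    have ea : a + (∑ i : Fin r, k' i) + k0 = a + ∑ i : Fin (r+1), (Fin.cons k0 k' : Fin (r+1) → ℕ) i := by
      rw [Fin.sum_univ_succ]
      simp only [Fin.cons_zero, Fin.cons_succ]
      omega
    have eb : b + ((∑ i : Fin r, n i.succ) - ∑ i : Fin r, k' i) + (n 0 - k0)
        = b + ((∑ i : Fin (r+1), n i) - ∑ i : Fin (r+1), (Fin.cons k0 k' : Fin (r+1) → ℕ) i) := by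
      rw [Fin.sum_univ_succ, Fin.sum_univ_succ]
      simp only [Fin.cons_zero, Fin.cons_succ]
      omega
    unfold auxD
    rw [ea, eb, Fin.prod_univ_succ]
    simp only [Fin.cons_zero, Fin.cons_succ]
    ring

/-- Rodrigues-type formula for the type II Meixner--Angelesco polynomials
of the first kind: the composition over all rays of the raising operators
`Ψ^{β+N_ℓ+1}_{c_ℓ} ∘ ⋯ ∘ Ψ^{β+N_ℓ+n_ℓ}_{c_ℓ}` (with `N_ℓ = n_0 + ⋯ + n_{ℓ-1}`) applied to
the constant function `1` equals the explicit polynomial `M^{β,c}_n`. -/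
theorem meixner_rodrigues_explicit (r : ℕ) (hr : 1 ≤ r) (c : Fin r → ℂ)
    (hc0 : ∀ ℓ, c ℓ ≠ 0) (hc1 : ∀ ℓ, c ℓ ≠ 1) (β : ℂ) (n : Fin r → ℕ) (x : ℂ) :
    ((List.finRange r).foldr
        (fun ℓ g =>
          chainPsi (c ℓ)
            (β + ((∑ i ∈ Finset.univ.filter (fun i : Fin r => i < ℓ), n i : ℕ) : ℂ))
            (n ℓ) ∘ g)
        id) (fun _ => 1) x
      = meixnerAngelesco r β c n x := by
  unfold meixnerAngelesco
  have h1 : (fun _ : ℂ => (1:ℂ))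
      = (fun y => poch (-y) 0 * poch (y + (β + ((∑ i, n i : ℕ) : ℂ))) 0) := by
    funext y; simp [poch]
  rw [h1, foldT r c hc0 hc1 β _ n rfl 0 0 x]
  apply Finset.sum_congr rfl
  intro k hk
  simp [mul_assoc]
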